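/- Let n ≥ 2 and let D be the weighted adjacency matrix of the complete directed graph on n nodes in which every arc (u,v), u ≠ v, carries its own distinct indeterminate weight x_{uv} (so k = n² − n and the arc weights are the coordinate functions on the parameter domain [0,∞)^k). Fix a target node t. Then any two distinct directed paths with the same start node and end node t have incomparable weights in the pointwise partial order on [0,∞)^k; consequently every directed spanning tree toward t is a shortest-path tree, and the number of shortest-path trees with target t equals the number n^{n−2} of labeled spanning trees of the complete graph on n nodes. -/

import Mathlib

/-- An entry of a parameterized weighted adjacency matrix with variables indexed by `ι`:
`none` is `∞` (no arc), `some (c, none)` is the constant weight `c`, `some (c, some i)`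
is the weight `c + x_i`. -/
abbrev Entry (ι : Type) := Option (ℝ × Option ι)

/-- Evaluation of an entry at a parameter vector. -/
noncomputable def entryEval {ι : Type} (e : Entry ι) (x : ι → ℝ) : ℝ :=
  match e with
  | none => 0
  | some (c, none) => c
  | some (c, some i) => c + x i

/-- Pointwise `≤` on the parameter domain described by `P`. -/
def leOn {ι : Type} (P : (ι → ℝ) → Prop) (f g : (ι → ℝ) → ℝ) : Prop :=
  ∀ x, P x → f x ≤ g x

/-- Strict pointwise `<` (i.e. `≤` and not `≥`) on the parameter domain `P`. -/
def ltOn {ι : Type} (P : (ι → ℝ) → Prop) (f g : (ι → ℝ) → ℝ) : Prop :=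
  leOn P f g ∧ ¬ leOn P g f

/-- The total weight of the walk starting at `u` visiting the nodes of `l`, as a function
of the parameters. -/
noncomputable def walkFn {n : ℕ} {ι : Type} (E : Fin n → Fin n → Entry ι) :
    Fin n → List (Fin n) → (ι → ℝ) → ℝ
  | _, [] => fun _ => 0
  | u, w :: l => fun x => entryEval (E u w) x + walkFn E w l x

/-- `par` encodes a shortest-path tree toward `t`. -/
def IsSPT {n : ℕ} {ι : Type} (E : Fin n → Fin n → Entry ι) (P : (ι → ℝ) → Prop)
    (t : Fin n) (par : Fin n → Fin n) : Prop :=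
  par t = t ∧ (∀ v, ∃ m : ℕ, par^[m] v = t) ∧
  (∀ v, v ≠ t → (E v (par v)).isSome) ∧
  ∃ p : Fin n → (ι → ℝ) → ℝ,
    p t = (fun _ => 0) ∧
    (∀ v, v ≠ t → p v = fun x => entryEval (E v (par v)) x + p (par v) x) ∧
    (∀ v w : Fin n, (E v w).isSome →
      ¬ ltOn P (fun x => entryEval (E v w) x + p w x) (p v))

namespace SPTAux
open Function Finset

variable {n : ℕ}

def IsTreeAt (t : Fin n) (p : Fin n → Fin n) : Prop :=
  p t = t ∧ ∀ v, ∃ m : ℕ, p^[m] v = t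

/-- nodes on a minimal path are distinct -/
lemma path_inj {f : Fin n → Fin n} {v t : Fin n} {m : ℕ}
    (hm : f^[m] v = t) (hmin : ∀ j < m, f^[j] v ≠ t)
    {i j : ℕ} (hij : i < j) (hjm : j ≤ m) : f^[i] v ≠ f^[j] v := by
  intro h
  have h2 : f^[(m - j) + i] v = t := by
    rw [Function.iterate_add_apply, h, ← Function.iterate_add_apply,
      Nat.sub_add_cancel hjm, hm]
  exact hmin _ (by omega) h2

open Classical in
noncomputable def cyc (g : Fin n → Fin n) : Finset (Fin n) :=
  Finset.univ.filter (fun x => ∃ m, 0 < m ∧ g^[m] x = x)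

lemma mem_cyc {g : Fin n → Fin n} {x : Fin n} :
    x ∈ cyc g ↔ ∃ m, 0 < m ∧ g^[m] x = x := by
  simp [cyc]

lemma cyc_maps {g : Fin n → Fin n} {x : Fin n} (hx : x ∈ cyc g) : g x ∈ cyc g := by
  obtain ⟨m, hm, hfix⟩ := mem_cyc.1 hx
  exact mem_cyc.2 ⟨m, hm, by
    rw [← Function.iterate_succ_apply, Function.iterate_succ_apply', hfix]⟩

lemma cyc_injOn {g : Fin n → Fin n} {x y : Fin n} (hx : x ∈ cyc g) (hy : y ∈ cyc g)
    (h : g x = g y) : x = y := by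
  obtain ⟨a, ha, hax⟩ := mem_cyc.1 hx
  obtain ⟨b, hb, hby⟩ := mem_cyc.1 hy
  have hxa : g^[a * b] x = x := by
    rw [Function.iterate_mul]; exact Function.iterate_fixed hax b
  have hyb : g^[a * b] y = y := by
    rw [mul_comm, Function.iterate_mul]; exact Function.iterate_fixed hby a
  have hab : 0 < a * b := by positivity
  calc x = g^[a * b] x := hxa.symm
    _ = g^[a * b - 1] (g x) := by rw [← Function.iterate_succ_apply]; congr 1; omega
    _ = g^[a * b - 1] (g y) := by rw [h]
    _ = g^[a * b] y := by rw [← Function.iterate_succ_apply]; congr 1; omega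
    _ = y := hyb

lemma exists_iterate_mem_cyc (g : Fin n → Fin n) (x : Fin n) :
    ∃ m, g^[m] x ∈ cyc g := by
  obtain ⟨i, j, hij, he⟩ := Finite.exists_ne_map_eq_of_infinite (fun i : ℕ => g^[i] x)
  rcases Nat.lt_or_ge i j with h | h
  · exact ⟨i, mem_cyc.2 ⟨j - i, by omega, by
      rw [← Function.iterate_add_apply]
      rw [show j - i + i = j by omega]; exact he.symm⟩⟩
  · have h' : j < i := by omega
    exact ⟨j, mem_cyc.2 ⟨i - j, by omega, by
      rw [← Function.iterate_add_apply]
      rw [show i - j + j = i by omega]; exact he⟩⟩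

lemma iterate_mem_of_closed {g : Fin n → Fin n} {s : Finset (Fin n)}
    (hmap : ∀ x ∈ s, g x ∈ s) {x : Fin n} (hx : x ∈ s) (i : ℕ) : g^[i] x ∈ s := by
  induction i with
  | zero => exact hx
  | succ i ih => rw [Function.iterate_succ_apply']; exact hmap _ ih

lemma mem_cyc_of_closed {g : Fin n → Fin n} {s : Finset (Fin n)}
    (hmap : ∀ x ∈ s, g x ∈ s) (hinj : ∀ x ∈ s, ∀ y ∈ s, g x = g y → x = y)
    {x : Fin n} (hx : x ∈ s) : x ∈ cyc g := by
  obtain ⟨i, j, hij, he⟩ := Finite.exists_ne_map_eq_of_infinite (fun i : ℕ => g^[i] x)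
  -- cancellation on s
  have cancel : ∀ (i : ℕ) (y z : Fin n), y ∈ s → z ∈ s → g^[i] y = g^[i] z → y = z := by
    intro i
    induction i with
    | zero => intro y z _ _ h; exact h
    | succ i ih =>
      intro y z hy hz h
      rw [Function.iterate_succ_apply', Function.iterate_succ_apply'] at h
      exact ih y z hy hz
        (hinj _ (iterate_mem_of_closed hmap hy i) _ (iterate_mem_of_closed hmap hz i) h)
  wlog hlt : i < j generalizing i j
  · exact this j i hij.symm he.symm (by omega)
  have key : g^[i] x = g^[i] (g^[j - i] x) := by
    rw [← Function.iterate_add_apply]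
    rw [show i + (j - i) = j by omega] at *
    exact he
  have := cancel i x (g^[j-i] x) hx (iterate_mem_of_closed hmap hx _) key
  exact mem_cyc.2 ⟨j - i, by omega, this.symm⟩


/-! ## Forward construction (Joyal) -/

noncomputable def kOf (g : Fin n → Fin n) : ℕ := (cyc g).card

lemma kOf_pos (hn : 0 < n) (g : Fin n → Fin n) : 0 < kOf g := by
  obtain ⟨m, hm⟩ := exists_iterate_mem_cyc g ⟨0, hn⟩
  exact Finset.card_pos.2 ⟨_, hm⟩

noncomputable def eOf (g : Fin n → Fin n) : Fin (kOf g) ≃o {x // x ∈ cyc g} :=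
  (cyc g).orderIsoOfFin rfl

noncomputable def wOf (g : Fin n → Fin n) : Fin (kOf g) → Fin n :=
  fun i => g ((eOf g i : Fin n))

lemma wOf_mem (g : Fin n → Fin n) (i : Fin (kOf g)) : wOf g i ∈ cyc g :=
  cyc_maps (eOf g i).2

lemma wOf_inj (g : Fin n → Fin n) : Function.Injective (wOf g) := by
  intro i j h
  have := cyc_injOn (eOf g i).2 (eOf g j).2 h
  exact (eOf g).injective (Subtype.ext this)

lemma wOf_surj (g : Fin n → Fin n) {x : Fin n} (hx : x ∈ cyc g) :
    ∃ i, wOf g i = x := by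
  have himg : Finset.image (wOf g) Finset.univ = cyc g := by
    apply Finset.eq_of_subset_of_card_le
    · intro y hy
      obtain ⟨i, _, rfl⟩ := Finset.mem_image.1 hy
      exact wOf_mem g i
    · rw [Finset.card_image_of_injective _ (wOf_inj g), Finset.card_univ,
        Fintype.card_fin]
      rfl
  rw [← himg] at hx
  obtain ⟨i, _, hi⟩ := Finset.mem_image.1 hx
  exact ⟨i, hi⟩

noncomputable def aOf (hn : 0 < n) (g : Fin n → Fin n) : Fin n :=
  wOf g ⟨0, kOf_pos hn g⟩

noncomputable def bOf (hn : 0 < n) (g : Fin n → Fin n) : Fin n :=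
  wOf g ⟨kOf g - 1, by have := kOf_pos hn g; omega⟩

open Classical in
noncomputable def pOf (g : Fin n → Fin n) : Fin n → Fin n := fun x =>
  if hx : ∃ i, wOf g i = x then
    (if h : (Classical.choose hx).1 + 1 < kOf g then
      wOf g ⟨(Classical.choose hx).1 + 1, h⟩ else x)
  else g x

lemma pOf_w_succ (g : Fin n → Fin n) (j : Fin (kOf g)) (h : (j : ℕ) + 1 < kOf g) :
    pOf g (wOf g j) = wOf g ⟨(j : ℕ) + 1, h⟩ := by
  have hx : ∃ i, wOf g i = wOf g j := ⟨j, rfl⟩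
  have hc : Classical.choose hx = j := wOf_inj g (Classical.choose_spec hx)
  rw [pOf, dif_pos hx, hc, dif_pos h]

lemma pOf_w_last (g : Fin n → Fin n) (j : Fin (kOf g)) (h : (j : ℕ) + 1 = kOf g) :
    pOf g (wOf g j) = wOf g j := by
  have hx : ∃ i, wOf g i = wOf g j := ⟨j, rfl⟩
  have hc : Classical.choose hx = j := wOf_inj g (Classical.choose_spec hx)
  rw [pOf, dif_pos hx, hc, dif_neg (by omega)]

lemma pOf_not_mem (g : Fin n → Fin n) {x : Fin n} (hx : x ∉ cyc g) :
    pOf g x = g x := by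
  rw [pOf, dif_neg]
  intro ⟨i, hi⟩
  exact hx (hi ▸ wOf_mem g i)

lemma pOf_b (hn : 0 < n) (g : Fin n → Fin n) : pOf g (bOf hn g) = bOf hn g := by
  unfold bOf
  apply pOf_w_last
  show kOf g - 1 + 1 = kOf g
  have := kOf_pos hn g
  omega

lemma pOf_iter_w (hn : 0 < n) (g : Fin n → Fin n) (d : ℕ) :
    ∀ (j : Fin (kOf g)), (j : ℕ) + d = kOf g - 1 →
      (pOf g)^[d] (wOf g j) = bOf hn g := by
  induction d with
  | zero =>
    intro j hj
    simp only [Function.iterate_zero, id_eq]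
    unfold bOf; congr 1; exact Fin.ext (by show (j:ℕ) = kOf g - 1; omega)
  | succ d ih =>
    intro j hj
    have hk := kOf_pos hn g
    have h1 : (j : ℕ) + 1 < kOf g := by omega
    rw [Function.iterate_succ_apply, pOf_w_succ g j h1]
    exact ih ⟨(j : ℕ) + 1, h1⟩ (by show (j:ℕ) + 1 + d = kOf g - 1; omega)

lemma pOf_reaches (hn : 0 < n) (g : Fin n → Fin n) :
    ∀ (m : ℕ) (x : Fin n), g^[m] x ∈ cyc g → ∃ s, (pOf g)^[s] x = bOf hn g := by
  intro m
  induction m with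
  | zero =>
    intro x hx
    obtain ⟨j, rfl⟩ := wOf_surj g hx
    have hk := kOf_pos hn g
    exact ⟨kOf g - 1 - j, pOf_iter_w hn g _ j (by have := j.2; omega)⟩
  | succ m ih =>
    intro x hx
    by_cases hxc : x ∈ cyc g
    · obtain ⟨j, rfl⟩ := wOf_surj g hxc
      have hk := kOf_pos hn g
      exact ⟨kOf g - 1 - j, pOf_iter_w hn g _ j (by have := j.2; omega)⟩
    · rw [Function.iterate_succ_apply] at hx
      obtain ⟨s, hs⟩ := ih (g x) hx
      refine ⟨s + 1, ?_⟩
      rw [Function.iterate_succ_apply, pOf_not_mem g hxc, hs]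

lemma isTreeAt_bOf (hn : 0 < n) (g : Fin n → Fin n) :
    IsTreeAt (bOf hn g) (pOf g) := by
  refine ⟨pOf_b hn g, fun v => ?_⟩
  obtain ⟨m, hm⟩ := exists_iterate_mem_cyc g v
  exact pOf_reaches hn g m v hm

/-- forward recovery: the `p`-orbit of `a` is the word `w`. -/
lemma pOf_iter_a (hn : 0 < n) (g : Fin n → Fin n) :
    ∀ (j : ℕ) (h : j < kOf g), (pOf g)^[j] (aOf hn g) = wOf g ⟨j, h⟩ := by
  intro j
  induction j with
  | zero => intro h; rfl
  | succ j ih =>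
    intro h
    have hj : j < kOf g := by omega
    rw [Function.iterate_succ_apply', ih hj, pOf_w_succ g ⟨j, hj⟩ h]

lemma min_unique {f : Fin n → Fin n} {a b : Fin n} {m1 m2 : ℕ}
    (h1 : f^[m1] a = b) (h1m : ∀ j < m1, f^[j] a ≠ b)
    (h2 : f^[m2] a = b) (h2m : ∀ j < m2, f^[j] a ≠ b) : m1 = m2 := by
  by_contra hne
  rcases Nat.lt_or_ge m1 m2 with h | h
  · exact h2m m1 h h1
  · exact h1m m2 (by omega) h2

lemma pOf_hit_spec (hn : 0 < n) (g : Fin n → Fin n) :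
    (pOf g)^[kOf g - 1] (aOf hn g) = bOf hn g ∧
      ∀ j < kOf g - 1, (pOf g)^[j] (aOf hn g) ≠ bOf hn g := by
  have hk := kOf_pos hn g
  constructor
  · rw [pOf_iter_a hn g (kOf g - 1) (by omega)]; rfl
  · intro j hj he
    rw [pOf_iter_a hn g j (by omega)] at he
    have := wOf_inj g he
    have : j = kOf g - 1 := congrArg Fin.val this
    omega

lemma cyc_eq_image (hn : 0 < n) (g : Fin n → Fin n) :
    cyc g = (Finset.range (kOf g)).image (fun j => (pOf g)^[j] (aOf hn g)) := by
  ext x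
  constructor
  · intro hx
    obtain ⟨i, rfl⟩ := wOf_surj g hx
    refine Finset.mem_image.2 ⟨i.1, Finset.mem_range.2 i.2, ?_⟩
    rw [pOf_iter_a hn g i.1 i.2]
  · intro hx
    obtain ⟨j, hj, rfl⟩ := Finset.mem_image.1 hx
    rw [pOf_iter_a hn g j (Finset.mem_range.1 hj)]
    exact wOf_mem g _

lemma orderIso_val_congr {s s' : Finset (Fin n)} (h : s = s') {k k' : ℕ}
    (hk : s.card = k) (hk' : s'.card = k') (j : ℕ) (hj : j < k) (hj' : j < k') :
    ((s.orderIsoOfFin hk ⟨j, hj⟩ : {x // x ∈ s}) : Fin n)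
      = ((s'.orderIsoOfFin hk' ⟨j, hj'⟩ : {x // x ∈ s'}) : Fin n) := by
  subst h; subst hk; subst hk'; rfl

lemma conj_iterate (c : Equiv.Perm (Fin n)) (hc : ∀ y, c (c y) = y)
    (p : Fin n → Fin n) (m : ℕ) (y : Fin n) :
    (fun y => c (p (c y)))^[m] y = c (p^[m] (c y)) := by
  induction m generalizing y with
  | zero => simp [hc y]
  | succ m ih =>
    simp only [Function.iterate_succ_apply]
    rw [ih (c (p (c y))), hc]

lemma isTreeAt_conj {r : Fin n} {p : Fin n → Fin n} (h : IsTreeAt r p)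
    (c : Equiv.Perm (Fin n)) (hc : ∀ y, c (c y) = y) :
    IsTreeAt (c r) (fun y => c (p (c y))) := by
  constructor
  · show c (p (c (c r))) = c r
    rw [hc, h.1]
  · intro v
    obtain ⟨m, hm⟩ := h.2 (c v)
    exact ⟨m, by rw [conj_iterate c hc p m v, hm]⟩

noncomputable def phi (hn : 0 < n) (t : Fin n) (g : Fin n → Fin n) :
    Fin n × Fin n × (Fin n → Fin n) :=
  (aOf hn g, bOf hn g,
    fun y => Equiv.swap t (bOf hn g) (pOf g (Equiv.swap t (bOf hn g) y)))

lemma phi_tree (hn : 0 < n) (t : Fin n) (g : Fin n → Fin n) :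
    IsTreeAt t (phi hn t g).2.2 := by
  have := isTreeAt_conj (isTreeAt_bOf hn g) (Equiv.swap t (bOf hn g))
    (fun y => Equiv.swap_apply_self _ _ _)
  rwa [Equiv.swap_apply_right] at this

lemma phi_inj (hn : 0 < n) (t : Fin n) : Function.Injective (phi hn t) := by
  intro g g' h
  have ha : aOf hn g = aOf hn g' := congrArg Prod.fst h
  have hb : bOf hn g = bOf hn g' := congrArg (fun z => z.2.1) h
  have hq : (phi hn t g).2.2 = (phi hn t g').2.2 := congrArg (fun z => z.2.2) h
  -- recover p
  have hp : pOf g = pOf g' := by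
    funext y
    have h1 := congrFun hq (Equiv.swap t (bOf hn g) y)
    simp only [phi, ← hb] at h1
    have h2 := congrArg (Equiv.swap t (bOf hn g)) h1
    rwa [Equiv.swap_apply_self, Equiv.swap_apply_self, Equiv.swap_apply_self] at h2
  -- recover k
  have hs := pOf_hit_spec hn g
  have hs' := pOf_hit_spec hn g'
  rw [← ha, ← hb, ← hp] at hs'
  have hk1 : kOf g - 1 = kOf g' - 1 := min_unique hs.1 hs.2 hs'.1 hs'.2
  have hkg := kOf_pos hn g
  have hkg' := kOf_pos hn g'
  have hk : kOf g = kOf g' := by omega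
  -- recover cyc
  have hc : cyc g = cyc g' := by
    rw [cyc_eq_image hn g, cyc_eq_image hn g', ← ha, ← hp, ← hk]
  -- pointwise
  funext x
  by_cases hx : x ∈ cyc g
  · have hx' : x ∈ cyc g' := hc ▸ hx
    set i := (eOf g).symm ⟨x, hx⟩ with hidef
    have hxi : ((eOf g i : {y // y ∈ cyc g}) : Fin n) = x := by
      rw [hidef, OrderIso.apply_symm_apply]
    have hgx : g x = (pOf g)^[i.1] (aOf hn g) := by
      rw [pOf_iter_a hn g i.1 i.2, ← hxi]
      rfl
    have hi1 : i.1 < kOf g' := hk ▸ i.2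
    have hval : ((eOf g' ⟨i.1, hi1⟩ : {y // y ∈ cyc g'}) : Fin n) = x := by
      rw [← hxi]
      exact (orderIso_val_congr hc rfl rfl i.1 i.2 hi1).symm
    have hg'x : g' x = (pOf g')^[i.1] (aOf hn g') := by
      rw [pOf_iter_a hn g' i.1 hi1, ← hval]
      rfl
    rw [hgx, hg'x, ← ha, ← hp]
  · have hx' : x ∉ cyc g' := hc ▸ hx
    rw [← pOf_not_mem g hx, ← pOf_not_mem g' hx', hp]


/-! ## Inverse construction -/

section Psi

variable {pp : Fin n → Fin n} {a b : Fin n}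

noncomputable def mOf (hex : ∃ m, pp^[m] a = b) : ℕ := Nat.find hex

lemma mOf_spec (hex : ∃ m, pp^[m] a = b) : pp^[mOf hex] a = b := Nat.find_spec hex

lemma mOf_min (hex : ∃ m, pp^[m] a = b) : ∀ j < mOf hex, pp^[j] a ≠ b :=
  fun _ hj => Nat.find_min hex hj

lemma mOf_path_inj (hex : ∃ m, pp^[m] a = b) {i j : ℕ} (hij : i < j)
    (hjm : j ≤ mOf hex) : pp^[i] a ≠ pp^[j] a :=
  path_inj (mOf_spec hex) (mOf_min hex) hij hjm

noncomputable def COf (hex : ∃ m, pp^[m] a = b) : Finset (Fin n) :=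
  (Finset.range (mOf hex + 1)).image (fun j => pp^[j] a)

lemma COf_card (hex : ∃ m, pp^[m] a = b) : (COf hex).card = mOf hex + 1 := by
  rw [COf, Finset.card_image_of_injOn, Finset.card_range]
  intro i hi j hj hij
  simp only [Finset.coe_range, Set.mem_Iio] at hi hj
  by_contra hne
  rcases Nat.lt_or_ge i j with h | h
  · exact mOf_path_inj hex h (by omega) hij
  · exact mOf_path_inj hex (by omega) (by omega) hij.symm

lemma mem_COf_iff (hex : ∃ m, pp^[m] a = b) {x : Fin n} :
    x ∈ COf hex ↔ ∃ j, j ≤ mOf hex ∧ pp^[j] a = x := by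
  simp only [COf, Finset.mem_image, Finset.mem_range]
  constructor
  · rintro ⟨j, hj, rfl⟩; exact ⟨j, by omega, rfl⟩
  · rintro ⟨j, hj, rfl⟩; exact ⟨j, by omega, rfl⟩

lemma b_mem_COf (hex : ∃ m, pp^[m] a = b) : b ∈ COf hex :=
  (mem_COf_iff hex).2 ⟨mOf hex, le_refl _, mOf_spec hex⟩

noncomputable def EOf (hex : ∃ m, pp^[m] a = b) :
    Fin (mOf hex + 1) ≃o {x // x ∈ COf hex} :=
  (COf hex).orderIsoOfFin (COf_card hex)

noncomputable def gOf (hex : ∃ m, pp^[m] a = b) : Fin n → Fin n := fun x =>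
  if hx : x ∈ COf hex then pp^[((EOf hex).symm ⟨x, hx⟩ : Fin (mOf hex + 1)).1] a
  else pp x

lemma gOf_E (hex : ∃ m, pp^[m] a = b) (i : Fin (mOf hex + 1)) :
    gOf hex ((EOf hex i : {x // x ∈ COf hex}) : Fin n) = pp^[(i : ℕ)] a := by
  have hx : ((EOf hex i : {x // x ∈ COf hex}) : Fin n) ∈ COf hex := (EOf hex i).2
  rw [gOf, dif_pos hx]
  congr 2
  rw [Subtype.coe_eta, OrderIso.symm_apply_apply]

lemma gOf_not_mem (hex : ∃ m, pp^[m] a = b) {x : Fin n} (hx : x ∉ COf hex) :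
    gOf hex x = pp x := dif_neg hx

lemma gOf_maps (hex : ∃ m, pp^[m] a = b) {x : Fin n} (hx : x ∈ COf hex) :
    gOf hex x ∈ COf hex := by
  rw [gOf, dif_pos hx]
  exact (mem_COf_iff hex).2 ⟨_, by omega, rfl⟩

lemma gOf_injOn (hex : ∃ m, pp^[m] a = b) {x y : Fin n} (hx : x ∈ COf hex)
    (hy : y ∈ COf hex) (h : gOf hex x = gOf hex y) : x = y := by
  simp only [gOf] at h
  rw [dif_pos hx, dif_pos hy] at h
  set i := (EOf hex).symm ⟨x, hx⟩ with hi
  set j := (EOf hex).symm ⟨y, hy⟩ with hj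
  have hij : i = j := by
    by_contra hne
    have hne' : (i : ℕ) ≠ (j : ℕ) := fun hc => hne (Fin.ext hc)
    rcases Nat.lt_or_ge (i : ℕ) (j : ℕ) with hlt | hge
    · exact mOf_path_inj hex hlt (by omega) h
    · exact mOf_path_inj hex (by omega) (by omega) h.symm
  have := congrArg (EOf hex) hij
  rw [hi, hj, OrderIso.apply_symm_apply, OrderIso.apply_symm_apply] at this
  exact congrArg Subtype.val this

lemma gOf_reach_C (hex : ∃ m, pp^[m] a = b) :
    ∀ (r : ℕ) (y : Fin n), pp^[r] y ∈ COf hex → ∃ s, (gOf hex)^[s] y ∈ COf hex := by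
  intro r
  induction r with
  | zero => intro y hy; exact ⟨0, hy⟩
  | succ r ih =>
    intro y hy
    by_cases hyC : y ∈ COf hex
    · exact ⟨0, hyC⟩
    · rw [Function.iterate_succ_apply] at hy
      obtain ⟨s, hs⟩ := ih (pp y) hy
      refine ⟨s + 1, ?_⟩
      rw [Function.iterate_succ_apply, gOf_not_mem hex hyC]
      exact hs

lemma cyc_gOf (hex : ∃ m, pp^[m] a = b) (hre : ∀ v, ∃ s, pp^[s] v = b) :
    cyc (gOf hex) = COf hex := by
  ext x
  constructor
  · intro hx
    obtain ⟨q0, hq0, hfix⟩ := mem_cyc.1 hx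
    obtain ⟨sb, hsb⟩ := hre x
    obtain ⟨s, hs⟩ := gOf_reach_C hex sb x (by rw [hsb]; exact b_mem_COf hex)
    have hclose : ∀ i, (gOf hex)^[i] ((gOf hex)^[s] x) ∈ COf hex :=
      iterate_mem_of_closed (fun z hz => gOf_maps hex hz) hs
    have hfix2 : (gOf hex)^[q0 * (s + 1)] x = x := by
      rw [Function.iterate_mul]; exact Function.iterate_fixed hfix _
    have hM : s < q0 * (s + 1) :=
      lt_of_lt_of_le (Nat.lt_succ_self s) (Nat.le_mul_of_pos_left _ hq0)
    have hmem : (gOf hex)^[q0 * (s + 1)] x ∈ COf hex := by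
      rw [show q0 * (s + 1) = (q0 * (s + 1) - s) + s by omega,
        Function.iterate_add_apply]
      exact hclose _
    rwa [hfix2] at hmem
  · intro hx
    exact mem_cyc_of_closed (fun z hz => gOf_maps hex hz)
      (fun z hz y hy => gOf_injOn hex hz hy) hx

end Psi

lemma conj_tree_at_b (t b : Fin n) {q : Fin n → Fin n} (hq : IsTreeAt t q) :
    IsTreeAt b (fun y => Equiv.swap t b (q (Equiv.swap t b y))) := by
  have := isTreeAt_conj hq (Equiv.swap t b) (fun y => Equiv.swap_apply_self _ _ _)
  rwa [Equiv.swap_apply_left] at this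

noncomputable def psi (t : Fin n) (z : Fin n × Fin n × {q : Fin n → Fin n // IsTreeAt t q}) :
    Fin n → Fin n :=
  gOf (pp := fun y => Equiv.swap t z.2.1 (z.2.2.1 (Equiv.swap t z.2.1 y)))
    (a := z.1) (b := z.2.1) ((conj_tree_at_b t z.2.1 z.2.2.2).2 z.1)

lemma psi_inj (t : Fin n) : Function.Injective (psi t) := by
  intro z z' h
  obtain ⟨a, b, q, hq⟩ := z
  obtain ⟨a', b', q', hq'⟩ := z'
  set pp : Fin n → Fin n := fun y => Equiv.swap t b (q (Equiv.swap t b y)) with hppdef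
  set pp' : Fin n → Fin n := fun y => Equiv.swap t b' (q' (Equiv.swap t b' y)) with hppdef'
  have htree : IsTreeAt b pp := conj_tree_at_b t b hq
  have htree' : IsTreeAt b' pp' := conj_tree_at_b t b' hq'
  have hex : ∃ m, pp^[m] a = b := htree.2 a
  have hex' : ∃ m, pp'^[m] a' = b' := htree'.2 a'
  have hg : gOf hex = gOf hex' := h
  -- the cyclic sets agree
  have hre : ∀ v, ∃ s, pp^[s] v = b := htree.2
  have hre' : ∀ v, ∃ s, pp'^[s] v = b' := htree'.2
  have hC : COf hex = COf hex' := by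
    rw [← cyc_gOf hex hre, ← cyc_gOf hex' hre', hg]
  have hm : mOf hex = mOf hex' := by
    have h1 := COf_card hex
    have h2 := COf_card hex'
    rw [hC, h2] at h1
    omega
  -- indices correspond
  have hEval : ∀ (j : ℕ) (hj : j < mOf hex + 1) (hj' : j < mOf hex' + 1),
      ((EOf hex ⟨j, hj⟩ : {x // x ∈ COf hex}) : Fin n)
        = ((EOf hex' ⟨j, hj'⟩ : {x // x ∈ COf hex'}) : Fin n) := by
    intro j hj hj'
    exact orderIso_val_congr hC (COf_card hex) (COf_card hex') j hj hj'
  have hiter : ∀ (j : ℕ) (hj : j < mOf hex + 1), pp^[j] a = pp'^[j] a' := by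
    intro j hj
    have hj' : j < mOf hex' + 1 := by omega
    rw [← gOf_E hex ⟨j, hj⟩, ← gOf_E hex' ⟨j, hj'⟩, ← hEval j hj hj', hg]
  -- recover a and b
  have ha : a = a' := hiter 0 (by omega)
  have hb : b = b' := by
    have := hiter (mOf hex) (by omega)
    rw [mOf_spec hex] at this
    rw [this, hm, mOf_spec hex']
  -- recover pp
  have hpp : pp = pp' := by
    funext x
    by_cases hx : x ∈ COf hex
    · obtain ⟨j, hjm, hjx⟩ := (mem_COf_iff hex).1 hx
      have hx' : pp'^[j] a' = x := by rw [← hiter j (by omega)]; exact hjx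
      rcases Nat.lt_or_ge j (mOf hex) with hlt | hge
      · conv_lhs => rw [← hjx, ← Function.iterate_succ_apply' pp j a]
        conv_rhs => rw [← hx', ← Function.iterate_succ_apply' pp' j a']
        exact hiter (j + 1) (by omega)
      · have hjem : j = mOf hex := by omega
        have hxb : x = b := by rw [← hjx, hjem, mOf_spec hex]
        rw [hxb, htree.1, hb]
        exact (htree'.1).symm
    · have hx' : x ∉ COf hex' := hC ▸ hx
      rw [← gOf_not_mem hex hx, ← gOf_not_mem hex' hx', hg]
  -- recover q
  have hqq : q = q' := by
    funext y
    have h1 : q y = Equiv.swap t b (pp (Equiv.swap t b y)) := by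
      rw [hppdef]
      simp only [Equiv.swap_apply_self]
    have h2 : q' y = Equiv.swap t b' (pp' (Equiv.swap t b' y)) := by
      rw [hppdef']
      simp only [Equiv.swap_apply_self]
    rw [h1, h2, hpp, hb]
  subst ha hb hqq
  rfl


lemma card_isTreeAt (hn2 : 2 ≤ n) (t : Fin n) :
    Nat.card {q : Fin n → Fin n // IsTreeAt t q} = n ^ (n - 2) := by
  have hn : 0 < n := by omega
  have hle1 : Nat.card (Fin n → Fin n)
      ≤ Nat.card (Fin n × Fin n × {q : Fin n → Fin n // IsTreeAt t q}) := by
    apply Nat.card_le_card_of_injective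
      (fun g => ((phi hn t g).1, (phi hn t g).2.1, ⟨(phi hn t g).2.2, phi_tree hn t g⟩))
    intro g g' h
    simp only [Prod.mk.injEq, Subtype.mk.injEq] at h
    apply phi_inj hn t
    obtain ⟨h1, h2, h3⟩ := h
    exact Prod.ext h1 (Prod.ext h2 h3)
  have hle2 : Nat.card (Fin n × Fin n × {q : Fin n → Fin n // IsTreeAt t q})
      ≤ Nat.card (Fin n → Fin n) :=
    Nat.card_le_card_of_injective (psi t) (psi_inj t)
  have heq := le_antisymm hle1 hle2
  rw [Nat.card_prod, Nat.card_prod, Nat.card_eq_fintype_card (α := Fin n → Fin n),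
    Nat.card_eq_fintype_card (α := Fin n), Fintype.card_fun, Fintype.card_fin] at heq
  have e1 : n * (n * n ^ (n - 2)) = n ^ n := by
    rw [← pow_succ', ← pow_succ']
    congr 1
    omega
  have e2 : n * (n * Nat.card {q : Fin n → Fin n // IsTreeAt t q})
      = n * (n * n ^ (n - 2)) := by rw [e1, ← heq]
  have e3 := Nat.eq_of_mul_eq_mul_left hn e2
  exact Nat.eq_of_mul_eq_mul_left hn e3


section Graph

variable {n : ℕ} {E : Fin n → Fin n → Entry {p : Fin n × Fin n // p.1 ≠ p.2}}

/-- indicator parameter vector of a single arc -/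
noncomputable def ind (e0 : Fin n × Fin n) : {p : Fin n × Fin n // p.1 ≠ p.2} → ℝ :=
  fun a => if (a : Fin n × Fin n) = e0 then 1 else 0

lemma ind_nonneg (e0 : Fin n × Fin n) : ∀ a, 0 ≤ ind e0 a := by
  intro a
  unfold ind
  split <;> norm_num

lemma entry_nonneg (hE : ∀ u v : Fin n, ∀ h : u ≠ v, E u v = some (0, some ⟨(u, v), h⟩))
    (hEdiag : ∀ u : Fin n, E u u = none)
    {x : {p : Fin n × Fin n // p.1 ≠ p.2} → ℝ} (hx : ∀ a, 0 ≤ x a) (u v : Fin n) :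
    0 ≤ entryEval (E u v) x := by
  by_cases h : u = v
  · subst h; rw [hEdiag u]; exact le_refl _
  · rw [hE u v h]
    show 0 ≤ 0 + x _
    have := hx ⟨(u, v), h⟩
    linarith

lemma entry_eval_ne (hE : ∀ u v : Fin n, ∀ h : u ≠ v, E u v = some (0, some ⟨(u, v), h⟩))
    {u v : Fin n} (h : u ≠ v) (x : {p : Fin n × Fin n // p.1 ≠ p.2} → ℝ) :
    entryEval (E u v) x = x ⟨(u, v), h⟩ := by
  rw [hE u v h]
  show 0 + x _ = x _
  ring

lemma walk_nonneg (hE : ∀ u v : Fin n, ∀ h : u ≠ v, E u v = some (0, some ⟨(u, v), h⟩))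
    (hEdiag : ∀ u : Fin n, E u u = none)
    {x : {p : Fin n × Fin n // p.1 ≠ p.2} → ℝ} (hx : ∀ a, 0 ≤ x a) :
    ∀ (l : List (Fin n)) (u : Fin n), 0 ≤ walkFn E u l x := by
  intro l
  induction l with
  | nil => intro u; exact le_refl _
  | cons v l ih =>
    intro u
    show 0 ≤ entryEval (E u v) x + walkFn E v l x
    have := entry_nonneg hE hEdiag hx u v
    have := ih v
    linarith

lemma walk_eval_zero (hE : ∀ u v : Fin n, ∀ h : u ≠ v, E u v = some (0, some ⟨(u, v), h⟩))
    (hEdiag : ∀ u : Fin n, E u u = none) (e0 : Fin n × Fin n) :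
    ∀ (l : List (Fin n)) (u : Fin n), (∀ e ∈ (u :: l).zip l, e ≠ e0) →
      walkFn E u l (ind e0) = 0 := by
  intro l
  induction l with
  | nil => intro u _; rfl
  | cons v l ih =>
    intro u hne
    show entryEval (E u v) (ind e0) + walkFn E v l (ind e0) = 0
    have h1 : entryEval (E u v) (ind e0) = 0 := by
      by_cases h : u = v
      · subst h; rw [hEdiag u]; rfl
      · rw [entry_eval_ne hE h, ind, if_neg]
        exact hne (u, v) (by rw [List.zip_cons_cons]; exact List.mem_cons_self)
    have h2 : walkFn E v l (ind e0) = 0 := by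
      apply ih
      intro e he
      exact hne e (by rw [List.zip_cons_cons]; exact List.mem_cons_of_mem _ he)
    rw [h1, h2]; ring

lemma walk_eval_ge_one (hE : ∀ u v : Fin n, ∀ h : u ≠ v, E u v = some (0, some ⟨(u, v), h⟩))
    (hEdiag : ∀ u : Fin n, E u u = none) (e0 : Fin n × Fin n) :
    ∀ (l : List (Fin n)) (u : Fin n), e0 ∈ (u :: l).zip l →
      (∀ e ∈ (u :: l).zip l, (e : Fin n × Fin n).1 ≠ e.2) →
      1 ≤ walkFn E u l (ind e0) := by
  intro l
  induction l with
  | nil => intro u he _; simp [List.zip] at he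
  | cons v l ih =>
    intro u he hne
    rw [List.zip_cons_cons] at he
    show 1 ≤ entryEval (E u v) (ind e0) + walkFn E v l (ind e0)
    have hw0 : 0 ≤ walkFn E v l (ind e0) := walk_nonneg hE hEdiag (ind_nonneg e0) l v
    have huv : u ≠ v := hne (u, v) (by rw [List.zip_cons_cons]; exact List.mem_cons_self)
    rcases List.mem_cons.1 he with h | h
    · have h1 : entryEval (E u v) (ind e0) = 1 := by
        rw [entry_eval_ne hE huv, ind, if_pos h.symm]
      linarith
    · have h1 : 1 ≤ walkFn E v l (ind e0) := by
        apply ih v h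
        intro e heq
        exact hne e (by rw [List.zip_cons_cons]; exact List.mem_cons_of_mem _ heq)
      have h2 : 0 ≤ entryEval (E u v) (ind e0) :=
        entry_nonneg hE hEdiag (ind_nonneg e0) u v
      linarith

/-- distinct ends-at-`t` simple paths from the same start differ in some edge -/
lemma edges_subset_eq (t : Fin n) :
    ∀ (l l' : List (Fin n)) (u : Fin n),
      l.getLast? = some t → (u :: l).Nodup →
      l'.getLast? = some t → (u :: l').Nodup →
      (∀ e ∈ (u :: l).zip l, e ∈ (u :: l').zip l') → l = l' := by
  intro l
  induction l with
  | nil => intro l' u h1; simp at h1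
  | cons v l₂ ih =>
    intro l' u h1 h2 h3 h4 hsub
    cases l' with
    | nil => simp at h3
    | cons v' l₂' =>
      -- first edges agree
      have hfe := hsub (u, v) (by rw [List.zip_cons_cons]; exact List.mem_cons_self)
      rw [List.zip_cons_cons] at hfe
      have hvv : v = v' := by
        rcases List.mem_cons.1 hfe with h | h
        · exact (Prod.ext_iff.1 h).2
        · exfalso
          have hu : u ∈ v' :: l₂' := (List.of_mem_zip h).1
          exact (List.nodup_cons.1 h4).1 hu
      subst hvv
      -- tail edges subset
      have hsub2 : ∀ e ∈ (v :: l₂).zip l₂, e ∈ (v :: l₂').zip l₂' := by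
        intro e he
        have := hsub e (by rw [List.zip_cons_cons]; exact List.mem_cons_of_mem _ he)
        rw [List.zip_cons_cons] at this
        rcases List.mem_cons.1 this with h | h
        · exfalso
          have he1 : (e : Fin n × Fin n).1 ∈ v :: l₂ := (List.of_mem_zip he).1
          rw [h] at he1
          exact (List.nodup_cons.1 h2).1 he1
        · exact h
      cases l₂ with
      | nil =>
        -- v = t
        have hvt : v = t := by simpa using h1
        cases l₂' with
        | nil => rfl
        | cons w l₃ =>
          exfalso
          have h3' : (w :: l₃).getLast? = some t := by
            rw [← h3]; exact List.getLast?_cons_cons.symm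
          have htm : t ∈ w :: l₃ := List.mem_of_mem_getLast? h3'
          have hvn : v ∉ w :: l₃ := (List.nodup_cons.1 (List.nodup_cons.1 h4).2).1
          exact hvn (hvt ▸ htm)
      | cons w l₃ =>
        cases l₂' with
        | nil =>
          exfalso
          have hvt : v = t := by simpa using h3
          have h1' : (w :: l₃).getLast? = some t := by
            rw [← h1]; exact List.getLast?_cons_cons.symm
          have htm : t ∈ w :: l₃ := List.mem_of_mem_getLast? h1'
          have hvn : v ∉ w :: l₃ := (List.nodup_cons.1 (List.nodup_cons.1 h2).2).1
          exact hvn (hvt ▸ htm)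
        | cons w' l₃' =>
          have := ih (w' :: l₃') v
            (by rw [← h1]; exact List.getLast?_cons_cons.symm)
            ((List.nodup_cons.1 h2).2)
            (by rw [← h3]; exact List.getLast?_cons_cons.symm)
            ((List.nodup_cons.1 h4).2)
            hsub2
          rw [this]

lemma zip_ne_of_nodup :
    ∀ (l : List (Fin n)) (u : Fin n), (u :: l).Nodup →
      ∀ e ∈ (u :: l).zip l, (e : Fin n × Fin n).1 ≠ e.2 := by
  intro l
  induction l with
  | nil => intro u _ e he; simp [List.zip] at he
  | cons v l ih =>
    intro u hnd e he
    rw [List.zip_cons_cons] at he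
    rcases List.mem_cons.1 he with h | h
    · subst h
      intro hc
      have hc' : u = v := hc
      exact (List.nodup_cons.1 hnd).1 (by rw [hc']; exact List.mem_cons_self)
    · exact ih v (List.nodup_cons.1 hnd).2 e h

lemma part1 (hE : ∀ u v : Fin n, ∀ h : u ≠ v, E u v = some (0, some ⟨(u, v), h⟩))
    (hEdiag : ∀ u : Fin n, E u u = none) (t u : Fin n) (l l' : List (Fin n))
    (h1 : l.getLast? = some t) (h2 : (u :: l).Nodup)
    (h3 : l'.getLast? = some t) (h4 : (u :: l').Nodup) (hne : l ≠ l') :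
    ¬ leOn (fun x => ∀ a, 0 ≤ x a) (walkFn E u l) (walkFn E u l') := by
  -- find an edge of l not in l'
  have hsub : ¬ ∀ e ∈ (u :: l).zip l, e ∈ (u :: l').zip l' := by
    intro hsub
    exact hne (edges_subset_eq t l l' u h1 h2 h3 h4 hsub)
  push_neg at hsub
  obtain ⟨e0, he0, he0'⟩ := hsub
  intro hle
  have hwl : 1 ≤ walkFn E u l (ind e0) :=
    walk_eval_ge_one hE hEdiag e0 l u he0 (zip_ne_of_nodup l u h2)
  have hwl' : walkFn E u l' (ind e0) = 0 :=
    walk_eval_zero hE hEdiag e0 l' u (fun e he hc => he0' (hc ▸ he))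
  have := hle (ind e0) (ind_nonneg e0)
  rw [hwl'] at this
  linarith

lemma part2 (hE : ∀ u v : Fin n, ∀ h : u ≠ v, E u v = some (0, some ⟨(u, v), h⟩))
    (hEdiag : ∀ u : Fin n, E u u = none) (t : Fin n) (par : Fin n → Fin n)
    (h0 : par t = t) (hre : ∀ v, ∃ m : ℕ, par^[m] v = t) :
    IsSPT E (fun x => ∀ a, 0 ≤ x a) t par := by
  classical
  refine ⟨h0, hre, ?_, ?_⟩
  · intro v hv
    have hpv : par v ≠ v := by
      intro hc
      obtain ⟨m, hm⟩ := hre v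
      rw [Function.iterate_fixed hc m] at hm
      exact hv hm
    rw [hE v (par v) (Ne.symm hpv)]
    rfl
  · -- the potential function
    set mf : Fin n → ℕ := fun v => Nat.find (hre v) with hmf
    have hmspec : ∀ v, par^[mf v] v = t := fun v => Nat.find_spec (hre v)
    have hmmin : ∀ v, ∀ j < mf v, par^[j] v ≠ t := fun v j hj => Nat.find_min (hre v) hj
    set p : Fin n → ({p : Fin n × Fin n // p.1 ≠ p.2} → ℝ) → ℝ := fun v x =>
      ∑ i ∈ Finset.range (mf v), entryEval (E (par^[i] v) (par^[i+1] v)) x with hp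
    have hmt : mf t = 0 := by
      rw [hmf]
      simp only [Nat.find_eq_zero]
      exact Function.iterate_zero_apply par t
    have hmv : ∀ v, v ≠ t → mf v = mf (par v) + 1 := by
      intro v hv
      have hv0 : 0 < mf v := by
        rcases Nat.eq_zero_or_pos (mf v) with h | h
        · exfalso; have := hmspec v; rw [h] at this; exact hv this
        · exact h
      have hub : mf v ≤ mf (par v) + 1 := by
        apply Nat.find_le
        rw [Function.iterate_succ_apply]
        exact hmspec (par v)
      have hlb : mf (par v) ≤ mf v - 1 := by
        apply Nat.find_le
        have h5 := hmspec v
        rw [show mf v = mf v - 1 + 1 by omega, Function.iterate_succ_apply] at h5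
        exact h5
      omega
    have hrec : ∀ v, v ≠ t → p v = fun x => entryEval (E v (par v)) x + p (par v) x := by
      intro v hv
      funext x
      rw [hp]
      simp only []
      rw [hmv v hv, Finset.sum_range_succ']
      have h1 : (∑ i ∈ Finset.range (mf (par v)),
          entryEval (E (par^[i+1] v) (par^[i+1+1] v)) x)
          = ∑ i ∈ Finset.range (mf (par v)),
            entryEval (E (par^[i] (par v)) (par^[i+1] (par v))) x :=
        Finset.sum_congr rfl (fun i _ => by
          rw [Function.iterate_succ_apply par (i+1) v, Function.iterate_succ_apply par i v])
      have h2 : entryEval (E (par^[0] v) (par^[0+1] v)) x = entryEval (E v (par v)) x := by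
        simp
      rw [h1, h2, add_comm]
    refine ⟨p, ?_, hrec, ?_⟩
    · funext x
      rw [hp]
      simp only [hmt, Finset.range_zero, Finset.sum_empty]
    · intro v w hsome
      have hvw : v ≠ w := by
        intro hc
        subst hc
        rw [hEdiag v] at hsome
        exact Bool.noConfusion hsome
      by_cases hpv : par v = w
      · -- p v is literally the function
        have hvt : v ≠ t := by
          intro hc
          subst hc
          rw [h0] at hpv
          exact hvw hpv
        have := hrec v hvt
        rw [hpv] at this
        rw [← this]
        rintro ⟨hle, hnle⟩
        rw [this] at hle hnle
        exact hnle hle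
      · -- witness x: indicator of (v,w)
        rintro ⟨hle, -⟩
        have hx := hle (ind (v, w)) (ind_nonneg (v, w))
        have hpv0 : p v (ind (v, w)) = 0 := by
          rw [hp]
          apply Finset.sum_eq_zero
          intro i hi
          rw [Finset.mem_range] at hi
          by_cases hd : par^[i] v = par^[i+1] v
          · rw [← hd, hEdiag]; rfl
          · rw [entry_eval_ne hE hd, ind, if_neg]
            intro hc
            have hc1 : par^[i] v = v := (Prod.ext_iff.1 hc).1
            have hc2 : par^[i+1] v = w := (Prod.ext_iff.1 hc).2
            rcases Nat.eq_zero_or_pos i with hi0 | hi0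
            · subst hi0
              rw [Function.iterate_one] at hc2
              exact hpv hc2
            · exact path_inj (hmspec v) (hmmin v) hi0 (by omega) hc1.symm
        have hw0 : 0 ≤ p w (ind (v, w)) := by
          rw [hp]
          apply Finset.sum_nonneg
          intro i _
          exact entry_nonneg hE hEdiag (ind_nonneg (v, w)) _ _
        have he1 : entryEval (E v w) (ind (v, w)) = 1 := by
          rw [entry_eval_ne hE hvw]
          simp [ind]
        simp only at hx
        rw [hpv0, he1] at hx
        linarith

end Graph

end SPTAux

/-- in the complete directed graph on `n ≥ 2` nodes in which every arc
`(u,v)`, `u ≠ v`, carries its own indeterminate weight `x_{uv}`, any two distinct simple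
directed paths with the same start node and end node `t` have incomparable weights on
the domain `[0,∞)^{n²-n}`; consequently every directed spanning tree toward `t` is a
shortest-path tree, and the number of shortest-path trees with target `t` is exactly
`n^{n-2}`. -/
theorem complete_graph_spt_count {n : ℕ} (hn : 2 ≤ n) (t : Fin n)
    (E : Fin n → Fin n → Entry {p : Fin n × Fin n // p.1 ≠ p.2})
    (hE : ∀ u v : Fin n, ∀ h : u ≠ v, E u v = some (0, some ⟨(u, v), h⟩))
    (hEdiag : ∀ u : Fin n, E u u = none) :
    (∀ (u : Fin n) (l l' : List (Fin n)),
        l.getLast? = some t → (u :: l).Nodup →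
        l'.getLast? = some t → (u :: l').Nodup → l ≠ l' →
        ¬ leOn (fun x => ∀ a, 0 ≤ x a) (walkFn E u l) (walkFn E u l') ∧
        ¬ leOn (fun x => ∀ a, 0 ≤ x a) (walkFn E u l') (walkFn E u l)) ∧
    (∀ par : Fin n → Fin n, par t = t → (∀ v, ∃ m : ℕ, par^[m] v = t) →
        IsSPT E (fun x => ∀ a, 0 ≤ x a) t par) ∧
    {par : Fin n → Fin n | IsSPT E (fun x => ∀ a, 0 ≤ x a) t par}.ncard = n ^ (n - 2) := by
  have hn0 : 0 < n := by omega
  refine ⟨?_, ?_, ?_⟩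
  · intro u l l' h1 h2 h3 h4 hne
    exact ⟨SPTAux.part1 hE hEdiag t u l l' h1 h2 h3 h4 hne,
           SPTAux.part1 hE hEdiag t u l' l h3 h4 h1 h2 hne.symm⟩
  · intro par h0 hre
    exact SPTAux.part2 hE hEdiag t par h0 hre
  · have hset : {par : Fin n → Fin n | IsSPT E (fun x => ∀ a, 0 ≤ x a) t par}
        = {par : Fin n → Fin n | SPTAux.IsTreeAt t par} := by
      ext par
      constructor
      · intro h
        exact ⟨h.1, h.2.1⟩
      · intro h
        exact SPTAux.part2 hE hEdiag t par h.1 h.2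
    rw [hset, ← Nat.card_coe_set_eq]
    exact SPTAux.card_isTreeAt hn t
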